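/- Let (G,L) be an uncolorable pair such that G is a block (i.e., G is connected and has no separating vertex) and G has maximum multiplicity μ(G) ≥ 2 (some pair of vertices is joined by at least two parallel edges). Then G is r-regular for some even integer r ≥ 2. -/

import Mathlib

open scoped Classical

/-- A signed graph: a finite loopless multigraph together with a sign `+1` or `-1`
on each edge. -/
structure SignedGraph where
  /-- vertex type -/
  V : Type
  /-- edge type -/
  E : Type
  fintypeV : Fintype V
  fintypeE : Fintype E
  decEqV : DecidableEq V
  /-- the two (distinct) endpoints of an edge, as an unordered pair -/
  ends : E → Sym2 V
  loopless : ∀ e : E, ¬ (ends e).IsDiag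
  /-- the sign of an edge -/
  sign : E → ℤ
  sign_unit : ∀ e : E, sign e = 1 ∨ sign e = -1

attribute [instance] SignedGraph.fintypeV SignedGraph.fintypeE SignedGraph.decEqV

namespace SignedGraph

variable (G : SignedGraph)

/-- The degree of a vertex: the number of edges incident with it. -/
noncomputable def degree (v : G.V) : ℕ :=
  (Finset.univ.filter (fun e : G.E => v ∈ G.ends e)).card

/-- The maximum degree `Δ(G)`. -/
noncomputable def maxDegree : ℕ :=
  Finset.univ.sup (fun v : G.V => G.degree v)

/-- Two vertices are adjacent if some edge joins them. -/
def Adj (v w : G.V) : Prop := ∃ e : G.E, G.ends e = s(v, w)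

/-- The simple graph of the adjacency relation (underlying simplification). -/
def adjGraph : SimpleGraph G.V where
  Adj := G.Adj
  symm := ⟨fun _ _ h => by obtain ⟨e, he⟩ := h; exact ⟨e, he.trans (Sym2.eq_swap)⟩⟩
  loopless := ⟨fun v h => by
    obtain ⟨e, he⟩ := h
    exact G.loopless e (by rw [he]; exact Sym2.mk_isDiag_iff.mpr rfl)⟩

/-- A signed graph is connected if its underlying graph is connected. -/
def Connected : Prop := G.adjGraph.Connected

/-- The underlying graph is simple: no two parallel edges. -/
def SimpleUnderlying : Prop := ∀ e f : G.E, G.ends e = G.ends f → e = f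

/-- A (proper) coloring of a signed graph. -/
def IsColoring (φ : G.V → ℤ) : Prop :=
  ∀ (e : G.E) (v w : G.V), G.ends e = s(v, w) → φ v ≠ G.sign e * φ w

/-- The color set `Z_k`:  `Z_{2h} = {±1, …, ±h}` and `Z_{2h+1} = Z_{2h} ∪ {0}`. -/
def ZSet (k : ℕ) : Set ℤ := {x : ℤ | 2 * |x| ≤ (k : ℤ) ∧ (x = 0 → Odd k)}

/-- The signed chromatic number `χ±(G)`: the least `k` such that `G` admits a
coloring with image contained in `Z_k`. -/
noncomputable def signedChromaticNumber : ℕ :=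
  sInf {k : ℕ | ∃ φ : G.V → ℤ, G.IsColoring φ ∧ ∀ v : G.V, φ v ∈ ZSet k}

/-- `G` admits a coloring from the lists `L`. -/
def ListColorable (L : G.V → Finset ℤ) : Prop :=
  ∃ φ : G.V → ℤ, G.IsColoring φ ∧ ∀ v : G.V, φ v ∈ L v

/-- The signed choice number `χℓ±(G)`. -/
noncomputable def signedChoiceNumber : ℕ :=
  sInf {k : ℕ | ∀ L : G.V → Finset ℤ, (∀ v : G.V, (L v).card = k) → G.ListColorable L}

/-- `G` is degree choosable. -/
def DegreeChoosable : Prop :=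
  ∀ L : G.V → Finset ℤ, (∀ v : G.V, (L v).card = G.degree v) → G.ListColorable L

/-- `(G, L)` is an uncolorable pair. -/
def UncolorablePair (L : G.V → Finset ℤ) : Prop :=
  G.Connected ∧ (∀ v : G.V, G.degree v ≤ (L v).card) ∧ ¬ G.ListColorable L

/-- Walks in a signed multigraph. -/
inductive Walk (G : SignedGraph) : G.V → G.V → Type
  | nil (v : G.V) : Walk G v v
  | cons {v w u : G.V} (e : G.E) (he : G.ends e = s(v, w)) (p : Walk G w u) : Walk G v u

namespace Walk

variable {G}

/-- The list of edges of a walk. -/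
def edges : ∀ {v w : G.V}, Walk G v w → List G.E
  | _, _, .nil _ => []
  | _, _, .cons e _ p => e :: edges p

/-- The list of vertices of a walk. -/
def support : ∀ {v w : G.V}, Walk G v w → List G.V
  | _, _, .nil v => [v]
  | v, _, .cons _ _ p => v :: support p

/-- The length of a walk. -/
def length {v w : G.V} (p : Walk G v w) : ℕ := p.edges.length

/-- The sign product of a walk. -/
def signProd {v w : G.V} (p : Walk G v w) : ℤ := (p.edges.map G.sign).prod

/-- A cycle: a nonempty closed walk with no repeated edges and no repeated
vertices (except the first = last). -/
def IsCycle {v : G.V} (p : Walk G v v) : Prop :=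
  p.edges ≠ [] ∧ p.edges.Nodup ∧ p.support.tail.Nodup

end Walk

/-- A signed graph is balanced if every cycle has positive sign product. -/
def Balanced : Prop := ∀ (v : G.V) (p : Walk G v v), p.IsCycle → p.signProd = 1

/-- A signed graph is antibalanced if every even cycle has positive sign product
and every odd cycle has negative sign product. -/
def Antibalanced : Prop :=
  ∀ (v : G.V) (p : Walk G v v), p.IsCycle → p.signProd = (-1) ^ p.length

/-- `G` is balanced with parts `X`, `Y`: the vertex set is the disjoint union of
`X` and `Y` and an edge is negative iff it joins `X` to `Y`. -/
def BalancedWithParts (X Y : Set G.V) : Prop :=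
  X ∪ Y = Set.univ ∧ Disjoint X Y ∧
  ∀ (e : G.E) (v w : G.V), G.ends e = s(v, w) →
    (G.sign e = -1 ↔ (v ∈ X ∧ w ∈ Y) ∨ (v ∈ Y ∧ w ∈ X))

/-- The underlying graph is a complete (simple) graph. -/
def IsCompleteGraph : Prop :=
  G.SimpleUnderlying ∧ ∀ v w : G.V, v ≠ w → G.Adj v w

/-- `G` is a balanced complete graph. -/
def IsBalancedComplete : Prop := G.IsCompleteGraph ∧ G.Balanced

/-- The underlying graph is a cycle. -/
def IsCycleGraph : Prop :=
  G.Connected ∧ G.SimpleUnderlying ∧ ∀ v : G.V, G.degree v = 2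

/-- `G` is a balanced odd cycle. -/
def IsBalancedOddCycle : Prop :=
  G.IsCycleGraph ∧ G.Balanced ∧ Odd (Fintype.card G.V)

/-- `G` is an unbalanced even cycle. -/
def IsUnbalancedEvenCycle : Prop :=
  G.IsCycleGraph ∧ ¬ G.Balanced ∧ Even (Fintype.card G.V)

/-- Every edge of `G` comes in a pair of parallel edges of opposite sign, and
any two vertices are joined by at most two edges. -/
def Doubled : Prop :=
  ∀ (e : G.E) (v w : G.V), G.ends e = s(v, w) →
    ∃ f : G.E, f ≠ e ∧ G.ends f = s(v, w) ∧ G.sign f = - G.sign e ∧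
      ∀ g : G.E, G.ends g = s(v, w) → g = e ∨ g = f

/-- `G` is a `2Kₙ` for some `n ≥ 2`. -/
def IsDoubleComplete : Prop :=
  2 ≤ Fintype.card G.V ∧ G.Doubled ∧ ∀ v w : G.V, v ≠ w → G.Adj v w

/-- `G` is a `2Cₙ` for some odd `n ≥ 3`. -/
def IsDoubleOddCycle : Prop :=
  G.Connected ∧ G.Doubled ∧ (∀ v : G.V, G.degree v = 4) ∧ Odd (Fintype.card G.V)

/-- A brick. -/
def IsBrick : Prop :=
  G.IsBalancedComplete ∨ G.IsBalancedOddCycle ∨ G.IsUnbalancedEvenCycle ∨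
    G.IsDoubleComplete ∨ G.IsDoubleOddCycle

/-- A subgraph of a signed graph. -/
structure Subgraph (G : SignedGraph) where
  verts : Set G.V
  edges : Set G.E
  ends_mem : ∀ e ∈ edges, ∀ v ∈ G.ends e, v ∈ verts

namespace Subgraph

variable {G}

/-- A subgraph, regarded as a signed graph in its own right. -/
noncomputable def toSG (H : G.Subgraph) : SignedGraph where
  V := H.verts
  E := H.edges
  fintypeV := Fintype.ofFinite _
  fintypeE := Fintype.ofFinite _
  decEqV := inferInstance
  ends := fun e =>
    s((⟨(G.ends e.1).out.1, H.ends_mem e.1 e.2 _ (Sym2.out_fst_mem _)⟩ : H.verts),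
      (⟨(G.ends e.1).out.2, H.ends_mem e.1 e.2 _ (Sym2.out_snd_mem _)⟩ : H.verts))
  loopless := fun e h => by
    rw [Sym2.mk_isDiag_iff, Subtype.mk.injEq] at h
    exact G.loopless e.1 (by
      rw [← (G.ends e.1).out_eq]
      exact Sym2.mk_isDiag_iff.mpr h)
  sign := fun e => G.sign e.1
  sign_unit := fun e => G.sign_unit e.1

/-- Delete a vertex (and all incident edges) from a subgraph. -/
def delete (H : G.Subgraph) (v : G.V) : G.Subgraph where
  verts := H.verts \ {v}
  edges := {e ∈ H.edges | v ∉ G.ends e}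
  ends_mem := fun e he w hw =>
    ⟨H.ends_mem e he.1 w hw, fun h => he.2 (by rwa [Set.mem_singleton_iff.mp h] at hw)⟩

/-- Subgraph inclusion. -/
def Le (H K : G.Subgraph) : Prop := H.verts ⊆ K.verts ∧ H.edges ⊆ K.edges

/-- `v` is a separating (cut) vertex of the subgraph `H`. -/
def IsCutVertex (H : G.Subgraph) (v : G.V) : Prop :=
  v ∈ H.verts ∧ (H.delete v).verts.Nonempty ∧ ¬ (H.delete v).toSG.Connected

/-- `B` is a block of `G`: a maximal connected subgraph without a cut vertex. -/
def IsBlock (B : G.Subgraph) : Prop :=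
  B.toSG.Connected ∧ (∀ v : G.V, ¬ B.IsCutVertex v) ∧
  ∀ B' : G.Subgraph, B.Le B' → B'.toSG.Connected →
    (∀ v : G.V, ¬ B'.IsCutVertex v) → B'.Le B

/-- The degree of a vertex in a subgraph. -/
noncomputable def degree (H : G.Subgraph) (v : G.V) : ℕ :=
  (Finset.univ.filter (fun e : G.E => e ∈ H.edges ∧ v ∈ G.ends e)).card

/-- The minimum degree of a subgraph. -/
noncomputable def minDegree (H : G.Subgraph) : ℕ :=
  sInf {d : ℕ | ∃ v ∈ H.verts, H.degree v = d}

/-- The subgraph admits a coloring from the lists `L`. -/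
def ListColorable (H : G.Subgraph) (L : G.V → Finset ℤ) : Prop :=
  ∃ φ : G.V → ℤ,
    (∀ e ∈ H.edges, ∀ v w : G.V, G.ends e = s(v, w) → φ v ≠ G.sign e * φ w) ∧
    ∀ v ∈ H.verts, φ v ∈ L v

/-- A proper subgraph. -/
def IsProper (H : G.Subgraph) : Prop :=
  H.verts ≠ Set.univ ∨ H.edges ≠ Set.univ

end Subgraph

/-- The subgraph consisting of all of `G`. -/
def topSubgraph : G.Subgraph := ⟨Set.univ, Set.univ, fun _ _ _ _ => trivial⟩

/-- A separating (cut) vertex of `G`. -/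
def IsCutVertex (v : G.V) : Prop := G.topSubgraph.IsCutVertex v

/-- The coloring number `col(G)`: one plus the maximum over all (nonempty)
subgraphs of the minimum degree. -/
noncomputable def coloringNumber : ℕ :=
  1 + sSup {d : ℕ | ∃ H : G.Subgraph, H.verts.Nonempty ∧ H.minDegree = d}

/-- The subgraph induced by a vertex set `X`. -/
def induced (X : Set G.V) : G.Subgraph where
  verts := X
  edges := {e : G.E | ∀ v ∈ G.ends e, v ∈ X}
  ends_mem := fun e he v hv => he v hv

/-- `G` is `L`-critical. -/
def LCritical (L : G.V → Finset ℤ) : Prop :=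
  ¬ G.ListColorable L ∧ ∀ H : G.Subgraph, H.IsProper → H.ListColorable L

/-- `G` is `k`-critical (with respect to the signed chromatic number). -/
def KCritical (k : ℕ) : Prop :=
  G.signedChromaticNumber = k ∧
  ∀ H : G.Subgraph, H.IsProper → H.toSG.signedChromaticNumber ≤ k - 1

/-- `G` is `k`-list-critical. -/
def KListCritical (k : ℕ) : Prop :=
  ∃ L : G.V → Finset ℤ, (∀ v : G.V, (L v).card = k - 1) ∧ G.LCritical L

/-- The signed graph `2H` obtained from a simple graph `H` by replacing every
edge by a pair of parallel edges, one positive and one negative. -/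
noncomputable def double {W : Type} [Fintype W] [DecidableEq W] (H : SimpleGraph W) :
    SignedGraph where
  V := W
  E := H.edgeSet × Bool
  fintypeV := inferInstance
  fintypeE := Fintype.ofFinite _
  decEqV := inferInstance
  ends := fun e => e.1.1
  loopless := fun e => H.not_isDiag_of_mem_edgeSet e.1.2
  sign := fun e => if e.2 then 1 else -1
  sign_unit := fun e => by by_cases h : e.2 <;> simp [h]

end SignedGraph

namespace SignedGraph

variable {G : SignedGraph}

lemma aux_sign_mul_self (e : G.E) : G.sign e * G.sign e = 1 := by
  rcases G.sign_unit e with h | h <;> rw [h] <;> norm_num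

lemma aux_sign_ne_zero (e : G.E) : G.sign e ≠ 0 := by
  rcases G.sign_unit e with h | h <;> rw [h] <;> norm_num

lemma aux_ne_of_ends (e : G.E) {v w : G.V} (h : G.ends e = s(v, w)) : v ≠ w := by
  intro hvw
  exact G.loopless e (by rw [h, hvw]; exact Sym2.mk_isDiag_iff.mpr rfl)

lemma aux_other_unique (e : G.E) {v w w' : G.V} (h : G.ends e = s(v, w))
    (h' : G.ends e = s(v, w')) : w = w' := by
  rcases Sym2.eq_iff.mp (h.symm.trans h') with ⟨_, rfl⟩ | ⟨hv, rfl⟩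
  · rfl
  · exact hv

/-- number of edges joining `x` and `u`. -/
noncomputable def auxMu (G : SignedGraph) (x u : G.V) : ℕ :=
  (Finset.univ.filter (fun g : G.E => G.ends g = s(x, u))).card

lemma auxMu_comm (x u : G.V) : G.auxMu x u = G.auxMu u x := by
  unfold auxMu
  congr 1
  apply Finset.filter_congr
  intro g _
  rw [Sym2.eq_swap (a := u) (b := x)]

/-- degree of `v` into the set `S`. -/
noncomputable def auxDS (G : SignedGraph) (S : Finset G.V) (v : G.V) : ℕ :=
  (Finset.univ.filter (fun e : G.E => ∃ w, G.ends e = s(v, w) ∧ w ∈ S)).card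

lemma auxDS_le_degree (S : Finset G.V) (v : G.V) : G.auxDS S v ≤ G.degree v := by
  apply Finset.card_le_card
  intro e he
  simp only [Finset.mem_filter, Finset.mem_univ, true_and] at he ⊢
  obtain ⟨w, hw, _⟩ := he
  rw [hw]; exact Sym2.mem_mk_left v w

lemma auxDS_erase (S : Finset G.V) (u v : G.V) (hu : u ∈ S) (hvu : v ≠ u) :
    G.auxDS (S.erase u) v + G.auxMu v u ≤ G.auxDS S v := by
  classical
  unfold auxDS auxMu
  rw [← Finset.card_union_of_disjoint]
  · apply Finset.card_le_card
    intro e he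
    simp only [Finset.mem_union, Finset.mem_filter, Finset.mem_univ, true_and] at he ⊢
    rcases he with ⟨w, hw, hwS⟩ | hw
    · exact ⟨w, hw, Finset.mem_of_mem_erase hwS⟩
    · exact ⟨u, hw, hu⟩
  · rw [Finset.disjoint_left]
    intro e he he'
    simp only [Finset.mem_filter, Finset.mem_univ, true_and] at he he'
    obtain ⟨w, hw, hwS⟩ := he
    exact (Finset.ne_of_mem_erase hwS) (aux_other_unique e hw he')

lemma auxDS_pos {S : Finset G.V} {v w : G.V} (e : G.E) (hw : G.ends e = s(v, w))
    (hwS : w ∈ S) : 1 ≤ G.auxDS S v := by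
  unfold auxDS
  rw [Nat.succ_le_iff, Finset.card_pos]
  exact ⟨e, by simp only [Finset.mem_filter, Finset.mem_univ, true_and]; exact ⟨w, hw, hwS⟩⟩

end SignedGraph
namespace SignedGraph

variable {G : SignedGraph}

lemma aux_greedy (G : SignedGraph) :
    ∀ (n : ℕ) (S : Finset G.V) (L' : G.V → Finset ℤ) (x : G.V) (rank : G.V → ℕ),
    S.card = n → x ∈ S →
    (∀ v ∈ S, v ≠ x → ∃ (e : G.E) (w : G.V), G.ends e = s(v, w) ∧ w ∈ S ∧ rank w < rank v) →
    (∀ v ∈ S, G.auxDS S v ≤ (L' v).card) →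
    G.auxDS S x < (L' x).card →
    ∃ φ : G.V → ℤ, (∀ v ∈ S, φ v ∈ L' v) ∧
      (∀ (e : G.E) (v w : G.V), G.ends e = s(v, w) → v ∈ S → w ∈ S →
        φ v ≠ G.sign e * φ w) := by
  intro n
  induction n with
  | zero =>
      intro S L' x rank hcard hx _ _ _
      exact absurd (Finset.card_pos.mpr ⟨x, hx⟩) (by omega)
  | succ n ih =>
      intro S L' x rank hcard hx Hord Hsize Hslack
      by_cases hS1 : S.erase x = ∅
      · -- S = {x}
        have hSx : S = {x} := by
          apply Finset.eq_singleton_iff_unique_mem.mpr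
          refine ⟨hx, fun y hy => ?_⟩
          by_contra hne
          exact (Finset.notMem_empty y) (hS1 ▸ Finset.mem_erase.mpr ⟨hne, hy⟩)
        have hL : (L' x).Nonempty := Finset.card_pos.mp (by omega)
        obtain ⟨c, hc⟩ := hL
        refine ⟨fun _ => c, ?_, ?_⟩
        · intro v hv; rw [hSx, Finset.mem_singleton] at hv; subst hv; exact hc
        · intro e v w hvw hvS hwS
          rw [hSx, Finset.mem_singleton] at hvS hwS
          subst hvS; subst hwS
          exact absurd hvw (fun hh => aux_ne_of_ends e hh rfl)
      · -- pick max-rank vertex v of S.erase x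
        obtain ⟨v, hvT, hvmax⟩ :=
          Finset.exists_max_image (S.erase x) rank (Finset.nonempty_of_ne_empty hS1)
        have hvS : v ∈ S := Finset.mem_of_mem_erase hvT
        have hvx : v ≠ x := Finset.ne_of_mem_erase hvT
        -- v has positive degree into S
        obtain ⟨e0, w0, hw0, hw0S, _⟩ := Hord v hvS hvx
        have hLv : (L' v).Nonempty := by
          have := auxDS_pos e0 hw0 hw0S (G := G)
          have := Hsize v hvS
          exact Finset.card_pos.mp (by omega)
        obtain ⟨c, hc⟩ := hLv
        -- new lists
        set L'' : G.V → Finset ℤ := fun u =>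
          L' u \ ((Finset.univ.filter (fun g : G.E => G.ends g = s(v, u))).image
            (fun g => G.sign g * c)) with hL''
        have hcard'' : ∀ u, (L' u).card ≤ (L'' u).card + G.auxMu v u := by
          intro u
          have h1 := Finset.le_card_sdiff
            ((Finset.univ.filter (fun g : G.E => G.ends g = s(v, u))).image
              (fun g => G.sign g * c)) (L' u)
          have h2 := Finset.card_image_le (s := Finset.univ.filter
            (fun g : G.E => G.ends g = s(v, u))) (f := fun g => G.sign g * c)
          simp only [hL'']
          unfold auxMu
          omega
        have hx' : x ∈ S.erase v := Finset.mem_erase.mpr ⟨fun hh => hvx hh.symm, hx⟩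
        obtain ⟨φ', hmem', hproper'⟩ := ih (S.erase v) L'' x rank
          (by rw [Finset.card_erase_of_mem hvS, hcard]; rfl)
          hx'
          (by -- Hord
            intro u huS hux
            obtain ⟨e, w, hw, hwS, hrk⟩ := Hord u (Finset.mem_of_mem_erase huS) hux
            refine ⟨e, w, hw, Finset.mem_erase.mpr ⟨?_, hwS⟩, hrk⟩
            intro hwv; subst hwv
            have := hvmax u (Finset.mem_erase.mpr ⟨hux, Finset.mem_of_mem_erase huS⟩)
            omega)
          (by -- Hsize
            intro u huS
            have h1 := auxDS_erase (G := G) S v u hvS (Finset.ne_of_mem_erase huS)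
            have h2 := Hsize u (Finset.mem_of_mem_erase huS)
            have h3 := hcard'' u
            have h4 : G.auxMu u v = G.auxMu v u := auxMu_comm u v
            omega)
          (by -- Hslack
            have h1 := auxDS_erase (G := G) S v x hvS (fun hh => hvx hh.symm)
            have h3 := hcard'' x
            have h4 : G.auxMu x v = G.auxMu v x := auxMu_comm x v
            omega)
        classical
        refine ⟨Function.update φ' v c, ?_, ?_⟩
        · intro u huS
          by_cases huv : u = v
          · rw [huv, Function.update_self]; exact hc
          · rw [Function.update_of_ne huv]
            exact Finset.mem_sdiff.mp (hmem' u (Finset.mem_erase.mpr ⟨huv, huS⟩)) |>.1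
        · intro e a b hab haS hbS
          by_cases hav : a = v <;> by_cases hbv : b = v
          · exact absurd (hav ▸ hbv ▸ hab) (fun hh => aux_ne_of_ends e hh rfl)
          · -- a = v, b ≠ v
            rw [hav, Function.update_self, Function.update_of_ne hbv]
            have hbmem := hmem' b (Finset.mem_erase.mpr ⟨hbv, hbS⟩)
            have hnot := (Finset.mem_sdiff.mp hbmem).2
            intro hcontra
            apply hnot
            rw [Finset.mem_image]
            refine ⟨e, ?_, ?_⟩
            · simp only [Finset.mem_filter, Finset.mem_univ, true_and]
              rw [← hav]; exact hab
            · rw [hcontra, ← mul_assoc, aux_sign_mul_self, one_mul]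
          · -- b = v, a ≠ v
            rw [hbv, Function.update_self, Function.update_of_ne hav]
            have hamem := hmem' a (Finset.mem_erase.mpr ⟨hav, haS⟩)
            have hnot := (Finset.mem_sdiff.mp hamem).2
            intro hcontra
            apply hnot
            rw [Finset.mem_image]
            refine ⟨e, ?_, hcontra.symm⟩
            simp only [Finset.mem_filter, Finset.mem_univ, true_and]
            rw [← hbv, hab]; exact Sym2.eq_swap
          · rw [Function.update_of_ne hav, Function.update_of_ne hbv]
            exact hproper' e a b hab (Finset.mem_erase.mpr ⟨hav, haS⟩)
              (Finset.mem_erase.mpr ⟨hbv, hbS⟩)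

end SignedGraph
namespace SignedGraph

variable {G : SignedGraph}

lemma aux_exists_adj_closer {α : Type} (Γ : SimpleGraph α) (hc : Γ.Connected)
    (t a : α) (ha : a ≠ t) : ∃ b, Γ.Adj a b ∧ Γ.dist b t < Γ.dist a t := by
  obtain ⟨p, hp⟩ :=
    SimpleGraph.Reachable.exists_walk_length_eq_dist (hc.preconnected a t)
  cases p with
  | nil => exact absurd rfl ha
  | @cons _ b _ hadj q =>
      refine ⟨b, hadj, ?_⟩
      have h1 := SimpleGraph.dist_le q
      rw [SimpleGraph.Walk.length_cons] at hp
      omega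

lemma aux_colorable_of_slack (G : SignedGraph) (L : G.V → Finset ℤ)
    (hc : G.Connected) (hsize : ∀ v, G.degree v ≤ (L v).card)
    (x : G.V) (hslack : G.degree x < (L x).card) : G.ListColorable L := by
  obtain ⟨φ, hmem, hproper⟩ := aux_greedy G (Finset.univ.card) Finset.univ L x
    (fun v => G.adjGraph.dist v x) rfl (Finset.mem_univ x)
    (fun v _ hvx => by
      obtain ⟨b, hadj, hlt⟩ := aux_exists_adj_closer G.adjGraph hc x v hvx
      obtain ⟨e, he⟩ : G.Adj v b := hadj
      exact ⟨e, b, he, Finset.mem_univ b, hlt⟩)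
    (fun v _ => le_trans (auxDS_le_degree _ _) (hsize v))
    (lt_of_le_of_lt (auxDS_le_degree _ _) hslack)
  exact ⟨φ, fun e v w hh => hproper e v w hh (Finset.mem_univ v) (Finset.mem_univ w),
    fun v => hmem v (Finset.mem_univ v)⟩

lemma aux_subgraph_adj {H : G.Subgraph} {a b : H.toSG.V} (hadj : H.toSG.Adj a b) :
    ∃ e : G.E, G.ends e = s(a.1, b.1) := by
  obtain ⟨e, he⟩ := hadj
  refine ⟨e.1, ?_⟩
  simp only [Subgraph.toSG] at he
  have h2 : s((G.ends e.1).out.1, (G.ends e.1).out.2) = s(a.1, b.1) := by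
    exact congrArg (Sym2.map Subtype.val) he
  rw [← h2, Sym2.mk, Prod.mk.eta, (G.ends e.1).out_eq]

/-- forbidden values at `u` after coloring `x` with `c`. -/
noncomputable def auxR (G : SignedGraph) (x : G.V) (c : ℤ) (u : G.V) : Finset ℤ :=
  (Finset.univ.filter (fun g : G.E => G.ends g = s(x, u))).image (fun g => G.sign g * c)

lemma auxR_card_le (x : G.V) (c : ℤ) (u : G.V) : (G.auxR x c u).card ≤ G.auxMu x u :=
  Finset.card_image_le

lemma aux_tight (G : SignedGraph) (L : G.V → Finset ℤ) (h : G.UncolorablePair L)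
    (hblock : ∀ v : G.V, ¬ G.IsCutVertex v)
    (x y : G.V) (g0 : G.E) (hg0 : G.ends g0 = s(x, y)) (c : ℤ) (hcL : c ∈ L x) :
    (L y \ G.auxR x c y).card + G.auxMu x y ≤ G.degree y := by
  classical
  by_contra hcon
  push_neg at hcon
  have hxy : x ≠ y := aux_ne_of_ends g0 hg0
  have hymem : y ∈ (Set.univ : Set G.V) \ {x} :=
    ⟨Set.mem_univ y, by simp only [Set.mem_singleton_iff]; exact fun hy => hxy hy.symm⟩
  have hconn : ((G.topSubgraph.delete x).toSG).Connected := by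
    by_contra hnc
    exact hblock x ⟨Set.mem_univ x, ⟨y, hymem⟩, hnc⟩
  set Γ := (G.topSubgraph.delete x).toSG.adjGraph with hΓ
  set y' : (G.topSubgraph.delete x).toSG.V := ⟨y, hymem⟩ with hy'
  -- the set of vertices to be colored
  set S : Finset G.V := Finset.univ.erase x with hS
  set L' : G.V → Finset ℤ := fun u => L u \ G.auxR x c u with hL'
  have hSmem : ∀ {v : G.V}, v ∈ S ↔ v ≠ x := by
    intro v; rw [hS, Finset.mem_erase]; simp
  -- rank function
  set rank : G.V → ℕ := fun v =>
    if hv : v ∈ (G.topSubgraph.delete x).verts then Γ.dist ⟨v, hv⟩ y' else 0 with hrank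
  have hmemOf : ∀ {v : G.V}, v ≠ x → v ∈ (G.topSubgraph.delete x).verts := by
    intro v hv
    exact ⟨Set.mem_univ v, by simp only [Set.mem_singleton_iff]; exact hv⟩
  -- basic degree bounds
  have hDSle : ∀ v ∈ S, G.auxDS S v + G.auxMu v x ≤ G.degree v := by
    intro v hv
    have h1 := auxDS_erase (G := G) Finset.univ x v (Finset.mem_univ x) (hSmem.mp hv)
    have h2 : G.auxDS Finset.univ v = G.degree v := by
      apply le_antisymm (auxDS_le_degree _ _)
      apply Finset.card_le_card
      intro e he
      simp only [Finset.mem_filter, Finset.mem_univ, true_and] at he ⊢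
      obtain ⟨w, hw⟩ := Sym2.mem_iff_exists.mp he
      exact ⟨w, hw, trivial⟩
    rw [← h2]
    exact h1
  have hL'card : ∀ u, (L u).card ≤ (L' u).card + G.auxMu x u := by
    intro u
    have h1 := Finset.le_card_sdiff (G.auxR x c u) (L u)
    have h2 := auxR_card_le (G := G) x c u
    simp only [hL']
    omega
  have hyS : y ∈ S := hSmem.mpr (fun hh => hxy hh.symm)
  obtain ⟨φ, hmem, hproper⟩ := aux_greedy G S.card S L' y rank rfl hyS
    (by -- Hord
      intro v hvS hvy
      have hvx : v ≠ x := hSmem.mp hvS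
      have hvm := hmemOf hvx
      have hvy' : (⟨v, hvm⟩ : (G.topSubgraph.delete x).toSG.V) ≠ y' := by
        intro hh; exact hvy (congrArg Subtype.val hh)
      obtain ⟨b, hadj, hlt⟩ := aux_exists_adj_closer Γ hconn y' ⟨v, hvm⟩ hvy'
      obtain ⟨e, he⟩ := aux_subgraph_adj (G := G) (H := G.topSubgraph.delete x) (a := ⟨v, hvm⟩) (b := b) hadj
      refine ⟨e, b.1, he, ?_, ?_⟩
      · apply hSmem.mpr
        intro hh
        exact absurd (hh ▸ b.2).2 (by simp)
      · simp only [hrank]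
        rw [dif_pos b.2, dif_pos hvm]
        exact hlt)
    (by -- Hsize
      intro v hvS
      have h1 := hDSle v hvS
      have h2 := h.2.1 v
      have h3 := hL'card v
      have h4 : G.auxMu v x = G.auxMu x v := auxMu_comm v x
      omega)
    (by -- Hslack
      have h1 := hDSle y hyS
      have h2 : G.degree y < (L' y).card + G.auxMu x y := by
        simp only [hL']; exact hcon
      have h4 : G.auxMu y x = G.auxMu x y := auxMu_comm y x
      omega)
  apply h.2.2
  refine ⟨Function.update φ x c, ?_, ?_⟩
  · intro e a b hab
    by_cases hax : a = x <;> by_cases hbx : b = x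
    · exact absurd (hax ▸ hbx ▸ hab) (fun hh => aux_ne_of_ends e hh rfl)
    · rw [hax, Function.update_self, Function.update_of_ne hbx]
      have hbmem := hmem b (hSmem.mpr hbx)
      rw [hL'] at hbmem
      have hnot := (Finset.mem_sdiff.mp hbmem).2
      intro hcontra
      apply hnot
      unfold auxR
      rw [Finset.mem_image]
      refine ⟨e, ?_, ?_⟩
      · simp only [Finset.mem_filter, Finset.mem_univ, true_and]
        rw [← hax]; exact hab
      · rw [hcontra, ← mul_assoc, aux_sign_mul_self, one_mul]
    · rw [hbx, Function.update_self, Function.update_of_ne hax]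
      have hamem := hmem a (hSmem.mpr hax)
      rw [hL'] at hamem
      have hnot := (Finset.mem_sdiff.mp hamem).2
      intro hcontra
      apply hnot
      unfold auxR
      rw [Finset.mem_image]
      refine ⟨e, ?_, hcontra.symm⟩
      simp only [Finset.mem_filter, Finset.mem_univ, true_and]
      rw [← hbx, hab]; exact Sym2.eq_swap
    · rw [Function.update_of_ne hax, Function.update_of_ne hbx]
      exact hproper e a b hab (hSmem.mpr hax) (hSmem.mpr hbx)
  · intro v
    by_cases hvx : v = x
    · rw [hvx, Function.update_self]; exact hcL
    · rw [Function.update_of_ne hvx]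
      have := hmem v (hSmem.mpr hvx)
      rw [hL'] at this
      exact (Finset.mem_sdiff.mp this).1

end SignedGraph
namespace SignedGraph

variable {G : SignedGraph}

lemma aux_inter (G : SignedGraph) (L : G.V → Finset ℤ) (h : G.UncolorablePair L)
    (hblock : ∀ v : G.V, ¬ G.IsCutVertex v) (x y : G.V) (g0 : G.E)
    (hg0 : G.ends g0 = s(x, y)) (c : ℤ) (hcL : c ∈ L x) :
    G.auxMu x y ≤ (L y ∩ G.auxR x c y).card := by
  have h1 := aux_tight G L h hblock x y g0 hg0 c hcL
  have h2 : (L y \ G.auxR x c y).card + (L y ∩ G.auxR x c y).card = (L y).card :=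
    Finset.card_sdiff_add_card_inter _ _
  have h3 := h.2.1 y
  omega

lemma auxR_subset (x : G.V) (c : ℤ) (u : G.V) :
    G.auxR x c u ⊆ ({c, -c} : Finset ℤ) := by
  intro t ht
  unfold auxR at ht
  rw [Finset.mem_image] at ht
  obtain ⟨g, _, rfl⟩ := ht
  rcases G.sign_unit g with hs | hs <;> rw [hs] <;> simp

lemma aux_two (G : SignedGraph) (L : G.V → Finset ℤ) (h : G.UncolorablePair L)
    (hblock : ∀ v : G.V, ¬ G.IsCutVertex v) {x y : G.V} (hmu : 2 ≤ G.auxMu x y)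
    {c : ℤ} (hcL : c ∈ L x) : c ≠ 0 ∧ c ∈ L y ∧ -c ∈ L y := by
  classical
  obtain ⟨g0, hg0⟩ : ∃ g : G.E, G.ends g = s(x, y) := by
    have : (Finset.univ.filter (fun g : G.E => G.ends g = s(x, y))).Nonempty :=
      Finset.card_pos.mp (by unfold auxMu at hmu; omega)
    obtain ⟨g, hg⟩ := this
    exact ⟨g, (Finset.mem_filter.mp hg).2⟩
  have h1 := aux_inter G L h hblock x y g0 hg0 c hcL
  have hsub : L y ∩ G.auxR x c y ⊆ ({c, -c} : Finset ℤ) :=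
    le_trans Finset.inter_subset_right (auxR_subset x c y)
  have hcard2 : ({c, -c} : Finset ℤ).card ≤ 2 :=
    le_trans (Finset.card_insert_le _ _) (by simp)
  have heq : L y ∩ G.auxR x c y = ({c, -c} : Finset ℤ) :=
    Finset.eq_of_subset_of_card_le hsub (hcard2.trans (hmu.trans h1))
  have hcne : c ≠ -c := by
    intro hcc
    have hle : ({c, -c} : Finset ℤ).card ≤ 1 := by
      rw [← hcc]; simp
    rw [← heq] at hle
    omega
  refine ⟨by intro h0; exact hcne (by rw [h0]; ring), ?_, ?_⟩
  · have : c ∈ L y ∩ G.auxR x c y := by rw [heq]; simp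
    exact (Finset.mem_inter.mp this).1
  · have : -c ∈ L y ∩ G.auxR x c y := by rw [heq]; simp
    exact (Finset.mem_inter.mp this).1

lemma aux_step (G : SignedGraph) (L : G.V → Finset ℤ) (h : G.UncolorablePair L)
    (hblock : ∀ v : G.V, ¬ G.IsCutVertex v) {x y : G.V} (g0 : G.E)
    (hg0 : G.ends g0 = s(x, y)) {c : ℤ} (hcL : c ∈ L x) : G.sign g0 * c ∈ L y := by
  classical
  have hg0f : g0 ∈ Finset.univ.filter (fun g : G.E => G.ends g = s(x, y)) := by
    simp only [Finset.mem_filter, Finset.mem_univ, true_and]; exact hg0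
  have hmu1 : 1 ≤ G.auxMu x y := by
    unfold auxMu; rw [Nat.succ_le_iff, Finset.card_pos]; exact ⟨g0, hg0f⟩
  by_cases hmu : G.auxMu x y = 1
  · obtain ⟨a, ha⟩ := Finset.card_eq_one.mp hmu
    have hga : g0 = a := by
      have := ha ▸ hg0f
      simpa using this
    have hRimg : G.auxR x c y = {G.sign g0 * c} := by
      unfold auxR
      rw [ha, ← hga, Finset.image_singleton]
    have h1 := aux_inter G L h hblock x y g0 hg0 c hcL
    rw [hRimg] at h1
    have : (L y ∩ {G.sign g0 * c}).Nonempty := Finset.card_pos.mp (by omega)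
    obtain ⟨t, ht⟩ := this
    rw [Finset.mem_inter, Finset.mem_singleton] at ht
    rw [← ht.2]; exact ht.1
  · have hmu2 : 2 ≤ G.auxMu x y := by omega
    obtain ⟨_, hcy, hncy⟩ := aux_two G L h hblock hmu2 hcL
    rcases G.sign_unit g0 with hs | hs <;> rw [hs]
    · simpa using hcy
    · simpa using hncy

lemma aux_card_le (G : SignedGraph) (L : G.V → Finset ℤ) (h : G.UncolorablePair L)
    (hblock : ∀ v : G.V, ¬ G.IsCutVertex v) {x y : G.V} (g0 : G.E)
    (hg0 : G.ends g0 = s(x, y)) : (L x).card ≤ (L y).card := by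
  apply Finset.card_le_card_of_injOn (fun t => G.sign g0 * t)
  · intro t ht
    exact aux_step G L h hblock g0 hg0 ht
  · intro a _ b _ hab
    exact mul_left_cancel₀ (aux_sign_ne_zero g0) hab

lemma aux_card_const (G : SignedGraph) (L : G.V → Finset ℤ) (h : G.UncolorablePair L)
    (hblock : ∀ v : G.V, ¬ G.IsCutVertex v) (v w : G.V) :
    (L v).card = (L w).card := by
  obtain ⟨p⟩ := h.1.preconnected v w
  induction p with
  | nil => rfl
  | cons hadj p ih =>
      obtain ⟨e, he⟩ : G.Adj _ _ := hadj
      refine le_antisymm ?_ ?_ |>.trans ih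
      · exact aux_card_le G L h hblock e he
      · exact aux_card_le G L h hblock e (he.trans Sym2.eq_swap)

lemma aux_deg_eq (G : SignedGraph) (L : G.V → Finset ℤ) (h : G.UncolorablePair L)
    (v : G.V) : G.degree v = (L v).card := by
  apply le_antisymm (h.2.1 v)
  by_contra hlt
  push_neg at hlt
  exact h.2.2 (aux_colorable_of_slack G L h.1 h.2.1 v hlt)

lemma aux_even_card (A : Finset ℤ) (h0 : (0 : ℤ) ∉ A) (hsym : ∀ c ∈ A, -c ∈ A) :
    Even A.card := by
  classical
  have hpart := Finset.card_filter_add_card_filter_not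
    (s := A) (p := fun c => 0 < c)
  have himg : A.filter (fun c => ¬ 0 < c) = (A.filter (fun c => 0 < c)).image
      (fun c => -c) := by
    ext b
    simp only [Finset.mem_filter, Finset.mem_image]
    constructor
    · rintro ⟨hbA, hb⟩
      refine ⟨-b, ⟨hsym b hbA, ?_⟩, by ring⟩
      rcases lt_trichotomy b 0 with hh | hh | hh
      · omega
      · exact absurd (hh ▸ hbA) h0
      · omega
    · rintro ⟨a, ⟨haA, ha⟩, rfl⟩
      exact ⟨hsym a haA, by omega⟩
  have hcard : (A.filter (fun c => ¬ 0 < c)).card = (A.filter (fun c => 0 < c)).card := by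
    rw [himg]
    exact Finset.card_image_of_injective _ neg_injective
  exact ⟨(A.filter (fun c => 0 < c)).card, by omega⟩

end SignedGraph
open SignedGraph in
/-- An uncolorable pair whose graph is a block with a multiple
edge is `r`-regular for an even `r ≥ 2`. -/
theorem uncolorablePair_block_multiEdge_even_regular (G : SignedGraph)
    (L : G.V → Finset ℤ) (h : G.UncolorablePair L)
    (hblock : ∀ v : G.V, ¬ G.IsCutVertex v)
    (hmul : ∃ e f : G.E, e ≠ f ∧ G.ends e = G.ends f) :
    ∃ r : ℕ, Even r ∧ 2 ≤ r ∧ ∀ v : G.V, G.degree v = r := by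
  classical
  obtain ⟨e, f, hef, hends⟩ := hmul
  obtain ⟨x, w, hxw⟩ : ∃ a b : G.V, G.ends e = s(a, b) :=
    ⟨(G.ends e).out.1, (G.ends e).out.2, by
      rw [Sym2.mk, Prod.mk.eta, (G.ends e).out_eq]⟩
  have hfw : G.ends f = s(x, w) := hends.symm.trans hxw
  have hmu2 : 2 ≤ G.auxMu x w := by
    have hsub : ({e, f} : Finset G.E) ⊆
        Finset.univ.filter (fun g : G.E => G.ends g = s(x, w)) := by
      intro g hg
      simp only [Finset.mem_insert, Finset.mem_singleton] at hg
      simp only [Finset.mem_filter, Finset.mem_univ, true_and]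
      rcases hg with rfl | rfl
      · exact hxw
      · exact hfw
    have h2 : ({e, f} : Finset G.E).card = 2 := Finset.card_pair hef
    unfold SignedGraph.auxMu
    rw [← h2]
    exact Finset.card_le_card hsub
  have hmu2' : 2 ≤ G.auxMu w x := by rw [SignedGraph.auxMu_comm]; exact hmu2
  -- symmetry and no zero in L x
  have h0 : (0 : ℤ) ∉ L x := by
    intro h0
    exact (SignedGraph.aux_two G L h hblock hmu2 h0).1 rfl
  have hsym : ∀ c ∈ L x, -c ∈ L x := by
    intro c hc
    have h1 := (SignedGraph.aux_two G L h hblock hmu2 hc).2.2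
    exact (SignedGraph.aux_two G L h hblock hmu2' h1).2.1
  refine ⟨(L x).card, SignedGraph.aux_even_card (L x) h0 hsym, ?_, ?_⟩
  · have hdx : G.degree x = (L x).card := SignedGraph.aux_deg_eq G L h x
    have hle : G.auxMu x w ≤ G.degree x := by
      unfold SignedGraph.auxMu SignedGraph.degree
      apply Finset.card_le_card
      intro g hg
      simp only [Finset.mem_filter, Finset.mem_univ, true_and] at hg ⊢
      rw [hg]
      exact Sym2.mem_mk_left x w
    omega
  · intro v
    rw [SignedGraph.aux_deg_eq G L h v]
    exact SignedGraph.aux_card_const G L h hblock v x
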